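/- arXiv:2011.08541 — 5 statements merged into one kernel-verified Lean document; each statement's English description precedes it below -/
import Mathlib

section
/- Let R : S → A → S → ℝ be a reward function, γ ∈ ℝ a discount factor, and φ : S → ℝ a potential, and let R̂ be the potential-based shaping of R by φ. Then for every trajectory τ = (s, a) of length L, the discounted rewards satisfy R̂(τ) = R(τ) + γ^L · φ(s_L) − φ(s_0). -/
/-- The discounted reward of a trajectory `(s, a)` of length `L`:
`R(τ) = ∑_{t=0}^{L-1} γ^t · R(s_t, a_t, s_{t+1})`. -/
noncomputable def discReward {S A : Type*} (R : S → A → S → ℝ) (γ : ℝ) (L : ℕ)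
    (s : Fin (L + 1) → S) (a : Fin L → A) : ℝ :=
  ∑ t : Fin L, γ ^ (t : ℕ) * R (s t.castSucc) (a t) (s t.succ)

/-- If `R̂` is the potential-based shaping of `R` by `φ`, then for every
trajectory `τ = (s, a)` of length `L`, `R̂(τ) = R(τ) + γ^L·φ(s_L) − φ(s_0)`. -/
theorem discReward_shaped {S A : Type*} (R : S → A → S → ℝ) (γ : ℝ) (φ : S → ℝ)
    (L : ℕ) (s : Fin (L + 1) → S) (a : Fin L → A) :
    discReward (fun s a s' => R s a s' + γ * φ s' - φ s) γ L s a =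
      discReward R γ L s a + γ ^ L * φ (s (Fin.last L)) - φ (s 0) := by
  induction L with
  | zero => simp [discReward]
  | succ n ih =>
      simp only [discReward, Fin.sum_univ_castSucc] at *
      have h := ih (fun i => s i.castSucc) (fun i => a i.castSucc)
      simp only [Fin.succ_castSucc, Fin.coe_castSucc, Fin.last, Fin.castSucc_zero,
        Fin.succ_mk, Fin.castSucc_mk] at *
      rw [h]
      ring
end

section
/- Let R : S → A → S → ℝ be a reward function, γ ∈ ℝ a discount factor, and c ∈ ℝ a constant, and define R̂(s, a, s') = R(s, a, s') + c for all s, a, s'. Then for every expert trajectory τ of length L and every finite family (τ_j)_{j=1}^M of trajectories of length L with the same starting state as τ, the ρ-projections agree exactly: ρ_τ(R̂) = ρ_τ(R). -/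
/-- The ρ-projection of a reward function `R`, given an expert trajectory `(s, a)` of
length `L` and a family of `M` trajectories `(s' j, a' j)` of length `L`:
`ρ_τ(R) = exp(R(τ)) / (exp(R(τ)) + ∑_{j=1}^M exp(R(τ_j)))`. -/
noncomputable def rhoProj {S A : Type*} (γ : ℝ) (L M : ℕ)
    (s : Fin (L + 1) → S) (a : Fin L → A)
    (s' : Fin M → Fin (L + 1) → S) (a' : Fin M → Fin L → A)
    (R : S → A → S → ℝ) : ℝ :=
  Real.exp (discReward R γ L s a) /
    (Real.exp (discReward R γ L s a) +
      ∑ j : Fin M, Real.exp (discReward R γ L (s' j) (a' j)))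

/-- Translating a reward function by a constant `c` leaves the ρ-projection
unchanged, for any family of trajectories with the same starting state as the expert
trajectory. -/
theorem rhoProj_const_translation {S A : Type*} (R : S → A → S → ℝ) (γ : ℝ) (c : ℝ)
    (L M : ℕ) (s : Fin (L + 1) → S) (a : Fin L → A)
    (s' : Fin M → Fin (L + 1) → S) (a' : Fin M → Fin L → A)
    (hstart : ∀ j : Fin M, s' j 0 = s 0) :
    rhoProj γ L M s a s' a' (fun x y z => R x y z + c) = rhoProj γ L M s a s' a' R := by
  have key : ∀ (u : Fin (L + 1) → S) (b : Fin L → A),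
      discReward (fun x y z => R x y z + c) γ L u b =
        discReward R γ L u b + ∑ t : Fin L, γ ^ (t : ℕ) * c := by
    intro u b
    simp [discReward, mul_add, Finset.sum_add_distrib]
  unfold rhoProj
  simp only [key, Real.exp_add, ← Finset.sum_mul]
  rw [← add_mul, mul_div_mul_right]
  exact (Real.exp_pos _).ne'
end

section
/- Let R : S → A → S → ℝ be a reward function, γ ∈ ℝ a discount factor, and φ : S → ℝ a potential, and let R̂ be the potential-based shaping of R by φ. Let τ be an expert trajectory of length L and (τ_j)_{j=1}^M a finite family of trajectories of length L which have the same starting state as τ and additionally the same end state as τ. Then the ρ-projections agree exactly: ρ_τ(R̂) = ρ_τ(R). -/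
/-- If all trajectories in the family share the same starting state and the
same end state as the expert trajectory, then potential-based reward shaping leaves the
ρ-projection exactly unchanged. -/
theorem rhoProj_shaping_same_endstate {S A : Type*} (R : S → A → S → ℝ) (γ : ℝ)
    (φ : S → ℝ) (L M : ℕ) (s : Fin (L + 1) → S) (a : Fin L → A)
    (s' : Fin M → Fin (L + 1) → S) (a' : Fin M → Fin L → A)
    (hstart : ∀ j : Fin M, s' j 0 = s 0)
    (hend : ∀ j : Fin M, s' j (Fin.last L) = s (Fin.last L)) :
    rhoProj γ L M s a s' a' (fun x y z => R x y z + γ * φ z - φ x) =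
      rhoProj γ L M s a s' a' R := by
  have key : ∀ (t : Fin (L + 1) → S) (b : Fin L → A),
      discReward (fun x y z => R x y z + γ * φ z - φ x) γ L t b =
        discReward R γ L t b + (γ ^ L * φ (t (Fin.last L)) - φ (t 0)) := by
    intro t b
    unfold discReward
    set f : ℕ → ℝ := fun i => γ ^ i * φ (t ⟨min i L, by omega⟩) with hf
    have htel : ∑ i : Fin L, (γ ^ ((i : ℕ) + 1) * φ (t i.succ)
        - γ ^ (i : ℕ) * φ (t i.castSucc)) = γ ^ L * φ (t (Fin.last L)) - φ (t 0) := by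
      have hcongr : ∀ i : Fin L, γ ^ ((i : ℕ) + 1) * φ (t i.succ)
          - γ ^ (i : ℕ) * φ (t i.castSucc) = f ((i : ℕ) + 1) - f (i : ℕ) := by
        intro i
        have h1 : (i : ℕ) + 1 ≤ L := i.isLt
        have h2 : (i : ℕ) ≤ L := le_of_lt i.isLt
        simp only [hf, Nat.min_eq_left h1, Nat.min_eq_left h2]
        congr 2
      rw [Finset.sum_congr rfl (fun i _ => hcongr i),
        Fin.sum_univ_eq_sum_range (fun i => f (i + 1) - f i), Finset.sum_range_sub f]
      simp [hf, Fin.last]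
    calc ∑ i : Fin L, γ ^ (i : ℕ) * (R (t i.castSucc) (b i) (t i.succ)
            + γ * φ (t i.succ) - φ (t i.castSucc))
        = ∑ i : Fin L, (γ ^ (i : ℕ) * R (t i.castSucc) (b i) (t i.succ)
            + (γ ^ ((i : ℕ) + 1) * φ (t i.succ) - γ ^ (i : ℕ) * φ (t i.castSucc))) := by
          apply Finset.sum_congr rfl; intro i _; ring
      _ = _ := by rw [Finset.sum_add_distrib, htel]
  set c := γ ^ L * φ (s (Fin.last L)) - φ (s 0) with hc
  have key' : ∀ j : Fin M,
      discReward (fun x y z => R x y z + γ * φ z - φ x) γ L (s' j) (a' j) =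
        discReward R γ L (s' j) (a' j) + c := by
    intro j; rw [key, hstart, hend]
  unfold rhoProj
  rw [key s a]
  simp only [key', Real.exp_add]
  rw [← Finset.sum_mul, ← add_mul, mul_div_mul_right _ _ (Real.exp_ne_zero c)]
end

section
/- (Remark 1 / Appendix A) Let S and A be finite nonempty types, let P : S → A → S → ℝ be a transition kernel (P(s'|s,a) ≥ 0 and ∑_{s'} P(s'|s,a) = 1 for all s, a), let R₀ : S → A → S → ℝ, γ ∈ ℝ, and let Q₀ : S → A → ℝ satisfy the soft Bellman equation with the Boltzmann operator: Q₀(s,a) = ∑_{s'} P(s'|s,a) · (R₀(s,a,s') + γ · ∑_{a'} π(s',a') · Q₀(s',a')) for all s, a, where π(s,a) = exp(Q₀(s,a)) / ∑_{a''} exp(Q₀(s,a'')). Let φ : S → ℝ and define Q(s,a) = Q₀(s,a) − φ(s) and the shaped reward R(s,a,s') = R₀(s,a,s') + γ·φ(s') − φ(s). Then (i) the Boltzmann policy of Q equals that of Q₀, i.e., exp(Q(s,a)) / ∑_{a''} exp(Q(s,a'')) = π(s,a) for all s, a, and (ii) Q satisfies the soft Bellman equation for the shaped reward: Q(s,a)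 = ∑_{s'} P(s'|s,a) · (R(s,a,s') + γ · ∑_{a'} π(s',a') · Q(s',a')) for all s, a. -/
/-- Remark 1 / Appendix A: Potential-based reward shaping for the soft
Bellman equation with the Boltzmann operator. If `Q₀` satisfies the soft Bellman equation
for `R₀` with Boltzmann policy `π`, and we define `Q(s,a) = Q₀(s,a) − φ(s)` and
`R(s,a,s') = R₀(s,a,s') + γ·φ(s') − φ(s)`, then (i) the Boltzmann policy of `Q` equals
`π`, and (ii) `Q` satisfies the soft Bellman equation for the shaped reward `R`. -/
theorem soft_bellman_potential_shaping {S A : Type*} [Fintype S] [Fintype A]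
    [Nonempty S] [Nonempty A]
    (P : S → A → S → ℝ)
    (hP0 : ∀ s a s', 0 ≤ P s a s') (hP1 : ∀ s a, ∑ s' : S, P s a s' = 1)
    (R₀ : S → A → S → ℝ) (γ : ℝ) (Q₀ : S → A → ℝ)
    (π : S → A → ℝ)
    (hπ : ∀ s a, π s a = Real.exp (Q₀ s a) / ∑ a'' : A, Real.exp (Q₀ s a''))
    (hQ₀ : ∀ s a, Q₀ s a =
      ∑ s' : S, P s a s' * (R₀ s a s' + γ * ∑ a' : A, π s' a' * Q₀ s' a'))
    (φ : S → ℝ) (Q : S → A → ℝ) (hQ : ∀ s a, Q s a = Q₀ s a - φ s)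
    (R : S → A → S → ℝ) (hR : ∀ s a s', R s a s' = R₀ s a s' + γ * φ s' - φ s) :
    (∀ s a, Real.exp (Q s a) / (∑ a'' : A, Real.exp (Q s a'')) = π s a) ∧
      (∀ s a, Q s a =
        ∑ s' : S, P s a s' * (R s a s' + γ * ∑ a' : A, π s' a' * Q s' a')) := by
  have hpos : ∀ s : S, 0 < ∑ a'' : A, Real.exp (Q₀ s a'') := fun s =>
    Finset.sum_pos (fun a _ => Real.exp_pos _) Finset.univ_nonempty
  have hsum1 : ∀ s : S, ∑ a : A, π s a = 1 := by
    intro s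
    simp only [hπ, div_eq_mul_inv, ← Finset.sum_mul]
    exact mul_inv_cancel₀ (hpos s).ne'
  constructor
  · intro s a
    have : ∀ a', Real.exp (Q s a') = Real.exp (Q₀ s a') * Real.exp (-φ s) := by
      intro a'; rw [hQ, Real.exp_sub, Real.exp_neg, div_eq_mul_inv]
    simp only [this, ← Finset.sum_mul, hπ]
    rw [mul_div_mul_right _ _ (Real.exp_pos (-φ s)).ne']
  · intro s a
    have key : ∀ s' : S, R s a s' + γ * ∑ a' : A, π s' a' * Q s' a'
        = (R₀ s a s' + γ * ∑ a' : A, π s' a' * Q₀ s' a') - φ s := by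
      intro s'
      have : ∑ a' : A, π s' a' * Q s' a'
          = (∑ a' : A, π s' a' * Q₀ s' a') - φ s' := by
        simp only [hQ, mul_sub]
        rw [Finset.sum_sub_distrib, ← Finset.sum_mul, hsum1, one_mul]
      rw [this, hR]; ring
    simp only [key, mul_sub]
    rw [Finset.sum_sub_distrib, ← Finset.sum_mul, hP1, one_mul, ← hQ₀, ← hQ]
end

section
/- (Q-function form of Theorem 1, potential-based reward shaping) Let S and A be finite nonempty types, let P : S → A → S → ℝ be a transition kernel (P(s'|s,a) ≥ 0 and ∑_{s'} P(s'|s,a) = 1 for all s, a), let R₀ : S → A → S → ℝ, γ ∈ ℝ, and let Q₀ : S → A → ℝ satisfy the Bellman optimality equation Q₀(s,a) = ∑_{s'} P(s'|s,a) · (R₀(s,a,s') + γ · max_{a'} Q₀(s',a')) for all s, a. Let φ : S → ℝ and define Q(s,a) = Q₀(s,a) − φ(s) and the shaped reward R(s,a,s') = R₀(s,a,s') + γ·φ(s') − φ(s). Then (i) Q satisfies the Bellman optimality equation for the shaped reward: Q(s,a) = ∑_{s'} P(s'|s,a) · (R(s,a,s') + γ · max_{a'} Q(s',a')) for all s, a,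 and (ii) for every state s, the set of maximizing actions is unchanged: {a | ∀ a', Q(s,a') ≤ Q(s,a)} = {a | ∀ a', Q₀(s,a') ≤ Q₀(s,a)}. -/
/-- Q-function form of Theorem 1, potential-based reward shaping: If `Q₀`
satisfies the Bellman optimality equation for `R₀`, and we define
`Q(s,a) = Q₀(s,a) − φ(s)` and the shaped reward `R(s,a,s') = R₀(s,a,s') + γ·φ(s') − φ(s)`,
then (i) `Q` satisfies the Bellman optimality equation for `R`, and (ii) for every state
the set of maximizing actions is unchanged. -/
theorem bellman_potential_shaping {S A : Type*} [Fintype S] [Fintype A]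
    [Nonempty S] [Nonempty A]
    (P : S → A → S → ℝ)
    (hP0 : ∀ s a s', 0 ≤ P s a s') (hP1 : ∀ s a, ∑ s' : S, P s a s' = 1)
    (R₀ : S → A → S → ℝ) (γ : ℝ) (Q₀ : S → A → ℝ)
    (hQ₀ : ∀ s a, Q₀ s a =
      ∑ s' : S, P s a s' *
        (R₀ s a s' + γ * Finset.univ.sup' Finset.univ_nonempty (fun a' => Q₀ s' a')))
    (φ : S → ℝ) (Q : S → A → ℝ) (hQ : ∀ s a, Q s a = Q₀ s a - φ s)
    (R : S → A → S → ℝ) (hR : ∀ s a s', R s a s' = R₀ s a s' + γ * φ s' - φ s) :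
    (∀ s a, Q s a =
      ∑ s' : S, P s a s' *
        (R s a s' + γ * Finset.univ.sup' Finset.univ_nonempty (fun a' => Q s' a'))) ∧
      (∀ s : S, {a : A | ∀ a' : A, Q s a' ≤ Q s a} =
        {a : A | ∀ a' : A, Q₀ s a' ≤ Q₀ s a}) := by
  have hsup : ∀ s' : S,
      Finset.univ.sup' Finset.univ_nonempty (fun a' => Q s' a') =
      Finset.univ.sup' Finset.univ_nonempty (fun a' => Q₀ s' a') - φ s' := by
    intro s'
    apply le_antisymm
    · apply Finset.sup'_le
      intro b _
      rw [hQ]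
      exact sub_le_sub_right (Finset.le_sup' _ (Finset.mem_univ b)) _
    · rw [sub_le_iff_le_add]
      apply Finset.sup'_le
      intro b _
      have := Finset.le_sup' (fun a' => Q s' a') (Finset.mem_univ b)
      rw [hQ] at this
      linarith
  constructor
  · intro s a
    have hterm : ∀ s' : S,
        P s a s' * (R s a s' + γ * Finset.univ.sup' Finset.univ_nonempty (fun a' => Q s' a'))
        = P s a s' * (R₀ s a s' + γ * Finset.univ.sup' Finset.univ_nonempty (fun a' => Q₀ s' a'))
          - P s a s' * φ s := by
      intro s'
      rw [hR, hsup]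
      ring
    calc Q s a = Q₀ s a - φ s := hQ s a
    _ = (∑ s' : S, P s a s' *
          (R₀ s a s' + γ * Finset.univ.sup' Finset.univ_nonempty (fun a' => Q₀ s' a')))
        - (∑ s' : S, P s a s') * φ s := by rw [← hQ₀, hP1, one_mul]
    _ = _ := by
      rw [Finset.sum_mul, ← Finset.sum_sub_distrib]
      exact Finset.sum_congr rfl fun s' _ => (hterm s').symm
  · intro s
    ext a
    simp only [Set.mem_setOf_eq, hQ]
    constructor
    · intro h a'; have := h a'; linarith
    · intro h a'; have := h a'; linarith
end
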